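/- arXiv:0704.0906 — 3 statements merged into one kernel-verified Lean document; each statement's English description precedes it below -/
import Mathlib

section
/- Let P_n be a birth and death chain on Ω_n = {1,...,n}, reversible with respect to a probability p_n. Suppose there exist constants A > 0, q > 0, B > 0 and an integer k such that P_n(i,i+1) ≥ A n^{-q} and P_n(i,i−1) ≥ A n^{-q} for all interior i, P_n(1,2) ≥ A n^{-q}, P_n(n,n−1) ≥ A n^{-q}, and p_n(i) ≤ B p_n(j) whenever i ≤ j ≤ k and p_n(j) ≤ B p_n(i) whenever k ≤ i ≤ j. Then the second-largest eigenvalue satisfies λ₁(P_n) ≤ 1 − (A/B) n^{−(q+2)}. -/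
open Finset

private lemma bd_path (g : ℕ → ℝ) (N a b : ℕ) (hab : a ≤ b) (hb : b ≤ N) :
    (g b - g a) ^ 2 ≤ (N : ℝ) * ∑ l ∈ Finset.Ico a b, (g (l + 1) - g l) ^ 2 := by
  have h1 : g b - g a = ∑ l ∈ Finset.Ico a b, (g (l + 1) - g l) := by
    rw [Finset.sum_Ico_eq_sum_range]
    have h2 := Finset.sum_range_sub (fun i => g (a + i)) (b - a)
    have h3 : ∑ i ∈ range (b - a), (g (a + i + 1) - g (a + i))
        = ∑ i ∈ range (b - a), ((fun i => g (a + i)) (i + 1) - (fun i => g (a + i)) i) := by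
      refine Finset.sum_congr rfl fun i _ => ?_
      simp only []
      rw [show a + (i + 1) = a + i + 1 by ring]
    rw [h3, h2, Nat.add_sub_cancel' hab, Nat.add_zero]
  rw [h1]
  calc (∑ l ∈ Finset.Ico a b, (g (l + 1) - g l)) ^ 2
      ≤ (#(Finset.Ico a b) : ℝ) * ∑ l ∈ Finset.Ico a b, (g (l + 1) - g l) ^ 2 :=
        sq_sum_le_card_mul_sum_sq
    _ ≤ (N : ℝ) * ∑ l ∈ Finset.Ico a b, (g (l + 1) - g l) ^ 2 := by
        apply mul_le_mul_of_nonneg_right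
        · rw [Nat.card_Ico]; exact_mod_cast Nat.le_trans (Nat.sub_le b a) hb
        · exact Finset.sum_nonneg fun l _ => sq_nonneg _

private lemma bd_swap (N : ℕ) (u d : ℕ → ℝ) :
    ∑ i ∈ range N, ∑ j ∈ range N, (u i * u j *
        (∑ l ∈ range N, ((if i ≤ l ∧ l < j then (1:ℝ) else 0)
          + (if j ≤ l ∧ l < i then (1:ℝ) else 0)) * d l))
      = ∑ l ∈ range N, d l * (2 * (∑ i ∈ range N, if i ≤ l then u i else 0)
          * (∑ j ∈ range N, if l < j then u j else 0)) := by
  have step1 : ∑ i ∈ range N, ∑ j ∈ range N, (u i * u j *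
        (∑ l ∈ range N, ((if i ≤ l ∧ l < j then (1:ℝ) else 0)
          + (if j ≤ l ∧ l < i then (1:ℝ) else 0)) * d l))
      = ∑ l ∈ range N, ∑ i ∈ range N, ∑ j ∈ range N, (u i * u j *
          (((if i ≤ l ∧ l < j then (1:ℝ) else 0)
            + (if j ≤ l ∧ l < i then (1:ℝ) else 0)) * d l)) := by
    rw [Finset.sum_congr rfl (fun i (_ : i ∈ range N) => Finset.sum_congr rfl
      (fun j (_ : j ∈ range N) => Finset.mul_sum _ _ _))]
    rw [Finset.sum_congr rfl (fun i (_ : i ∈ range N) => Finset.sum_comm), Finset.sum_comm]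
  rw [step1]
  refine Finset.sum_congr rfl fun l _ => ?_
  have key : ∀ i j : ℕ, u i * u j * (((if i ≤ l ∧ l < j then (1:ℝ) else 0)
      + (if j ≤ l ∧ l < i then (1:ℝ) else 0)) * d l)
      = (if i ≤ l then u i else 0) * (if l < j then u j else 0) * d l
        + (if j ≤ l then u j else 0) * (if l < i then u i else 0) * d l := by
    intro i j
    by_cases h1 : i ≤ l <;> by_cases h2 : l < j <;> by_cases h3 : j ≤ l <;>
      by_cases h4 : l < i <;> simp only [h1, h2, h3, h4, and_true, and_false, true_and,
        false_and, if_true, if_false, if_pos, if_neg, not_false_iff] <;> ring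
  have e1 : ∑ i ∈ range N, ∑ j ∈ range N,
      ((if i ≤ l then u i else 0) * (if l < j then u j else 0) * d l)
      = (∑ i ∈ range N, if i ≤ l then u i else 0)
        * (∑ j ∈ range N, if l < j then u j else 0) * d l := by
    rw [Finset.sum_mul_sum, Finset.sum_mul]
    exact Finset.sum_congr rfl fun i _ => by rw [Finset.sum_mul]
  have e2 : ∑ i ∈ range N, ∑ j ∈ range N,
      ((if j ≤ l then u j else 0) * (if l < i then u i else 0) * d l)
      = (∑ i ∈ range N, if i ≤ l then u i else 0)
        * (∑ j ∈ range N, if l < j then u j else 0) * d l := by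
    rw [Finset.sum_comm, Finset.sum_mul_sum, Finset.sum_mul]
    exact Finset.sum_congr rfl fun i _ => by rw [Finset.sum_mul]
  calc ∑ i ∈ range N, ∑ j ∈ range N, (u i * u j *
        (((if i ≤ l ∧ l < j then (1:ℝ) else 0)
          + (if j ≤ l ∧ l < i then (1:ℝ) else 0)) * d l))
      = ∑ i ∈ range N, ∑ j ∈ range N,
          ((if i ≤ l then u i else 0) * (if l < j then u j else 0) * d l
            + (if j ≤ l then u j else 0) * (if l < i then u i else 0) * d l) :=
        Finset.sum_congr rfl fun i _ => Finset.sum_congr rfl fun j _ => key i j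
    _ = (∑ i ∈ range N, ∑ j ∈ range N,
          ((if i ≤ l then u i else 0) * (if l < j then u j else 0) * d l))
        + (∑ i ∈ range N, ∑ j ∈ range N,
          ((if j ≤ l then u j else 0) * (if l < i then u i else 0) * d l)) := by
        rw [← Finset.sum_add_distrib]
        exact Finset.sum_congr rfl fun i _ => Finset.sum_add_distrib
    _ = d l * (2 * (∑ i ∈ range N, if i ≤ l then u i else 0)
          * (∑ j ∈ range N, if l < j then u j else 0)) := by rw [e1, e2]; ring

private lemma bd_fin_sum {n : ℕ} (g : Fin n → ℝ) (G : ℕ → ℝ)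
    (h : ∀ i : Fin n, G i.val = g i) : ∑ i, g i = ∑ i ∈ range n, G i := by
  rw [← Fin.sum_univ_eq_sum_range]
  exact Finset.sum_congr rfl fun i _ => (h i).symm

private lemma bd_fin_sum2 {n : ℕ} (g : Fin n → Fin n → ℝ) (G : ℕ → ℕ → ℝ)
    (h : ∀ i j : Fin n, G i.val j.val = g i j) :
    ∑ i, ∑ j, g i j = ∑ i ∈ range n, ∑ j ∈ range n, G i j := by
  rw [← Fin.sum_univ_eq_sum_range (fun i => ∑ j ∈ range n, G i j)]
  refine Finset.sum_congr rfl fun i _ => ?_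
  rw [← Fin.sum_univ_eq_sum_range (fun j => G i.val j)]
  exact Finset.sum_congr rfl fun j _ => (h i j).symm

/-- birth-and-death chain on `{1,…,n}` (here indexed by `Fin n`),
reversible w.r.t. `p`, with nearest-neighbour transitions bounded below by `A n^{-q}`
and stationary distribution `B`-unimodal with mode `k`: then every eigenvalue with a
nonconstant eigenfunction (i.e. the second-largest eigenvalue λ₁) is at most
`1 - (A/B) n^{-(q+2)}`. -/
theorem birth_death_second_eigenvalue (n : ℕ) (hn : 2 ≤ n)
    (P : Fin n → Fin n → ℝ) (p : Fin n → ℝ)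
    (hp : ∀ i, 0 < p i) (hpsum : ∑ i, p i = 1)
    (hP0 : ∀ i j, 0 ≤ P i j) (hP1 : ∀ i, ∑ j, P i j = 1)
    (hrev : ∀ i j, p i * P i j = p j * P j i)
    (hbd : ∀ i j : Fin n, ((i : ℕ) + 1 < (j : ℕ) ∨ (j : ℕ) + 1 < (i : ℕ)) → P i j = 0)
    (A B q : ℝ) (hA : 0 < A) (hB : 0 < B) (hq : 0 < q) (k : Fin n)
    (hnb : ∀ i j : Fin n, (j : ℕ) = (i : ℕ) + 1 →
        A * (n : ℝ) ^ (-q) ≤ P i j ∧ A * (n : ℝ) ^ (-q) ≤ P j i)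
    (hmode1 : ∀ i j : Fin n, i ≤ j → j ≤ k → p i ≤ B * p j)
    (hmode2 : ∀ i j : Fin n, k ≤ i → i ≤ j → p j ≤ B * p i) :
    ∀ (ev : ℝ) (f : Fin n → ℝ),
      (∀ i, ∑ j, P i j * f j = ev * f i) → (∃ i j, f i ≠ f j) →
      ev ≤ 1 - (A / B) * (n : ℝ) ^ (-(q + 2)) := by
  intro ev f heig hnc
  have npos : (0:ℝ) < n := by
    have : (0:ℕ) < n := by omega
    exact_mod_cast this
  set c : ℝ := (n : ℝ) ^ (-q) with hc
  have hcpos : 0 < c := Real.rpow_pos_of_pos npos _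
  have hAc : 0 < A * c := mul_pos hA hcpos
  have sqswap : ∀ a b : ℝ, (a - b) ^ 2 = (b - a) ^ 2 := fun a b => by ring
  -- Dirichlet identity
  have hE2 : ∑ i, ∑ j, p i * P i j * (f i - f j) ^ 2
      = 2 * (1 - ev) * ∑ i, p i * f i ^ 2 := by
    have t1 : ∑ i, ∑ j, p i * P i j * f i ^ 2 = ∑ i, p i * f i ^ 2 := by
      refine Finset.sum_congr rfl fun i _ => ?_
      calc ∑ j, p i * P i j * f i ^ 2 = (p i * f i ^ 2) * ∑ j, P i j := by
            rw [Finset.mul_sum]; exact Finset.sum_congr rfl fun j _ => by ring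
        _ = p i * f i ^ 2 := by rw [hP1 i, mul_one]
    have t2 : ∑ i, ∑ j, p i * P i j * (f i * f j) = ev * ∑ i, p i * f i ^ 2 := by
      rw [Finset.mul_sum]
      refine Finset.sum_congr rfl fun i _ => ?_
      calc ∑ j, p i * P i j * (f i * f j) = (p i * f i) * ∑ j, P i j * f j := by
            rw [Finset.mul_sum]; exact Finset.sum_congr rfl fun j _ => by ring
        _ = (p i * f i) * (ev * f i) := by rw [heig i]
        _ = ev * (p i * f i ^ 2) := by ring
    have t3 : ∑ i, ∑ j, p i * P i j * f j ^ 2 = ∑ i, p i * f i ^ 2 := by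
      rw [Finset.sum_congr rfl fun i (_ : i ∈ univ) => Finset.sum_congr rfl
        fun j (_ : j ∈ univ) => by rw [show p i * P i j * f j ^ 2
          = (p i * P i j) * f j ^ 2 from rfl, hrev i j]]
      rw [Finset.sum_comm]
      refine Finset.sum_congr rfl fun j _ => ?_
      calc ∑ i, p j * P j i * f j ^ 2 = (p j * f j ^ 2) * ∑ i, P j i := by
            rw [Finset.mul_sum]; exact Finset.sum_congr rfl fun i _ => by ring
        _ = p j * f j ^ 2 := by rw [hP1 j, mul_one]
    calc ∑ i, ∑ j, p i * P i j * (f i - f j) ^ 2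
        = ∑ i, ∑ j, (p i * P i j * f i ^ 2 - 2 * (p i * P i j * (f i * f j))
            + p i * P i j * f j ^ 2) :=
          Finset.sum_congr rfl fun i _ => Finset.sum_congr rfl fun j _ => by ring
      _ = (∑ i, ∑ j, p i * P i j * f i ^ 2)
          - 2 * (∑ i, ∑ j, p i * P i j * (f i * f j))
          + (∑ i, ∑ j, p i * P i j * f j ^ 2) := by
          simp only [Finset.sum_add_distrib, Finset.sum_sub_distrib, ← Finset.mul_sum]
      _ = (∑ i, p i * f i ^ 2) - 2 * (ev * ∑ i, p i * f i ^ 2) + ∑ i, p i * f i ^ 2 := by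
          rw [t1, t2, t3]
      _ = 2 * (1 - ev) * ∑ i, p i * f i ^ 2 := by ring
  have hnn : ∀ i j : Fin n, 0 ≤ p i * P i j * (f i - f j) ^ 2 := fun i j =>
    mul_nonneg (mul_nonneg (hp i).le (hP0 i j)) (sq_nonneg _)
  rcases eq_or_ne ev 1 with hev1 | hev1
  · -- eigenvalue 1 forces constant eigenfunction: contradiction
    exfalso
    have hzero : ∑ i, ∑ j, p i * P i j * (f i - f j) ^ 2 = 0 := by rw [hE2, hev1]; ring
    have h1 := (Finset.sum_eq_zero_iff_of_nonneg
      (fun i _ => Finset.sum_nonneg fun j _ => hnn i j)).mp hzero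
    have hterm : ∀ i j : Fin n, p i * P i j * (f i - f j) ^ 2 = 0 := fun i j =>
      (Finset.sum_eq_zero_iff_of_nonneg (fun j _ => hnn i j)).mp
        (h1 i (Finset.mem_univ i)) j (Finset.mem_univ j)
    have hadj : ∀ (m : ℕ) (h : m + 1 < n),
        f ⟨m, Nat.lt_of_succ_lt h⟩ = f ⟨m + 1, h⟩ := by
      intro m h
      have hPpos : 0 < P ⟨m, Nat.lt_of_succ_lt h⟩ ⟨m + 1, h⟩ :=
        lt_of_lt_of_le hAc (hnb ⟨m, Nat.lt_of_succ_lt h⟩ ⟨m + 1, h⟩ rfl).1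
      have h2 := hterm ⟨m, Nat.lt_of_succ_lt h⟩ ⟨m + 1, h⟩
      have hppos : 0 < p ⟨m, Nat.lt_of_succ_lt h⟩ * P ⟨m, Nat.lt_of_succ_lt h⟩ ⟨m + 1, h⟩ :=
        mul_pos (hp _) hPpos
      have h3 : (f ⟨m, Nat.lt_of_succ_lt h⟩ - f ⟨m + 1, h⟩) ^ 2 = 0 := by
        rcases mul_eq_zero.mp h2 with h' | h'
        · exact absurd h' (ne_of_gt hppos)
        · exact h'
      have h4 := pow_eq_zero_iff (n := 2) (by norm_num) |>.mp h3
      linarith [h4]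
    have hconst : ∀ (m : ℕ) (h : m < n), f ⟨m, h⟩ = f ⟨0, by omega⟩ := by
      intro m
      induction m with
      | zero => intro h; rfl
      | succ m ih =>
        intro h
        rw [← hadj m h]
        exact ih (Nat.lt_of_succ_lt h)
    obtain ⟨i, j, hij⟩ := hnc
    apply hij
    have hi := hconst i.val i.isLt
    have hj := hconst j.val j.isLt
    simp only [Fin.eta] at hi hj
    rw [hi, hj]
  · -- mean zero
    have hmean : ∑ i, p i * f i = 0 := by
      have h1 : ev * ∑ i, p i * f i = ∑ i, p i * f i := by
        calc ev * ∑ i, p i * f i = ∑ i, (p i * f i) * ev := by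
              rw [← Finset.sum_mul]; ring
          _ = ∑ i, p i * ∑ j, P i j * f j := by
              refine Finset.sum_congr rfl fun i _ => ?_
              rw [heig i]; ring
          _ = ∑ i, ∑ j, (p i * P i j) * f j := by
              refine Finset.sum_congr rfl fun i _ => ?_
              rw [Finset.mul_sum]
              exact Finset.sum_congr rfl fun j _ => by ring
          _ = ∑ i, ∑ j, (p j * P j i) * f j := by
              exact Finset.sum_congr rfl fun i _ => Finset.sum_congr rfl fun j _ => by
                rw [hrev i j]
          _ = ∑ j, ∑ i, (p j * P j i) * f j := Finset.sum_comm
          _ = ∑ j, p j * f j := by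
              refine Finset.sum_congr rfl fun j _ => ?_
              calc ∑ i, (p j * P j i) * f j = (p j * f j) * ∑ i, P j i := by
                    rw [Finset.mul_sum]; exact Finset.sum_congr rfl fun i _ => by ring
                _ = p j * f j := by rw [hP1 j, mul_one]
      by_contra hne
      have h2 : ev * (∑ i, p i * f i) = 1 * (∑ i, p i * f i) := by rw [h1, one_mul]
      exact hev1 (mul_right_cancel₀ hne h2)
    -- N2 positivity
    have hN2nn : ∀ i : Fin n, 0 ≤ p i * f i ^ 2 := fun i =>
      mul_nonneg (hp i).le (sq_nonneg _)
    have hN2pos : 0 < ∑ i, p i * f i ^ 2 := by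
      obtain ⟨i, j, hij⟩ := hnc
      have hne0 : f i ≠ 0 ∨ f j ≠ 0 := by
        by_contra h; push_neg at h; exact hij (by rw [h.1, h.2])
      have key : ∃ i0 : Fin n, 0 < p i0 * f i0 ^ 2 := by
        rcases hne0 with h | h
        · exact ⟨i, mul_pos (hp i) (lt_of_le_of_ne (sq_nonneg _) (Ne.symm (pow_ne_zero 2 h)))⟩
        · exact ⟨j, mul_pos (hp j) (lt_of_le_of_ne (sq_nonneg _) (Ne.symm (pow_ne_zero 2 h)))⟩
      obtain ⟨i0, hi0⟩ := key
      exact lt_of_lt_of_le hi0 (Finset.single_le_sum (fun i _ => hN2nn i) (Finset.mem_univ i0))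
    -- variance identity
    have hvar : ∑ i, ∑ j, p i * p j * (f i - f j) ^ 2 = 2 * ∑ i, p i * f i ^ 2 := by
      have inner : ∀ i : Fin n, ∑ j, p i * p j * (f i - f j) ^ 2
          = p i * f i ^ 2 - 2 * ((p i * f i) * (∑ j, p j * f j))
            + p i * (∑ j, p j * f j ^ 2) := by
        intro i
        calc ∑ j, p i * p j * (f i - f j) ^ 2
            = ∑ j, ((p i * f i ^ 2) * p j - 2 * ((p i * f i) * (p j * f j))
                + p i * (p j * f j ^ 2)) :=
              Finset.sum_congr rfl fun j _ => by ring
          _ = (p i * f i ^ 2) * (∑ j, p j) - 2 * ((p i * f i) * (∑ j, p j * f j))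
              + p i * (∑ j, p j * f j ^ 2) := by
              simp only [Finset.sum_add_distrib, Finset.sum_sub_distrib, ← Finset.mul_sum]
          _ = p i * f i ^ 2 - 2 * ((p i * f i) * (∑ j, p j * f j))
              + p i * (∑ j, p j * f j ^ 2) := by rw [hpsum, mul_one]
      calc ∑ i, ∑ j, p i * p j * (f i - f j) ^ 2
          = ∑ i, (p i * f i ^ 2 - 2 * ((p i * f i) * (∑ j, p j * f j))
              + p i * (∑ j, p j * f j ^ 2)) := Finset.sum_congr rfl fun i _ => inner i
        _ = ∑ i, (p i * f i ^ 2 + p i * (∑ j, p j * f j ^ 2)) := by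
            refine Finset.sum_congr rfl fun i _ => ?_
            rw [hmean]; ring
        _ = (∑ i, p i * f i ^ 2) + (∑ i, p i) * (∑ j, p j * f j ^ 2) := by
            rw [Finset.sum_add_distrib, ← Finset.sum_mul]
        _ = 2 * ∑ i, p i * f i ^ 2 := by rw [hpsum, one_mul]; ring
    -- ℕ-indexed versions
    set F : ℕ → ℝ := fun m => if h : m < n then f ⟨m, h⟩ else 0 with hF
    set pp : ℕ → ℝ := fun m => if h : m < n then p ⟨m, h⟩ else 0 with hpp
    set PP : ℕ → ℕ → ℝ := fun a b => if ha : a < n then if hb : b < n then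
      P ⟨a, ha⟩ ⟨b, hb⟩ else 0 else 0 with hPP
    have hFv : ∀ i : Fin n, F i.val = f i := fun i => by simp [hF, i.isLt]
    have hppv : ∀ i : Fin n, pp i.val = p i := fun i => by simp [hpp, i.isLt]
    have hPPv : ∀ i j : Fin n, PP i.val j.val = P i j := fun i j => by
      simp [hPP, i.isLt, j.isLt]
    have hppnn : ∀ m, 0 ≤ pp m := by
      intro m; rw [hpp]; dsimp only; split
      · exact (hp _).le
      · exact le_refl 0
    have hPPnn : ∀ a b, 0 ≤ PP a b := by
      intro a b; rw [hPP]; dsimp only; split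
      · split
        · exact hP0 _ _
        · exact le_refl 0
      · exact le_refl 0
    have hTnn : ∀ i j : ℕ, 0 ≤ pp i * PP i j * (F i - F j) ^ 2 := fun i j =>
      mul_nonneg (mul_nonneg (hppnn i) (hPPnn i j)) (sq_nonneg _)
    have hsum1 : ∑ i ∈ range n, pp i = 1 := by
      rw [← bd_fin_sum p pp hppv]; exact hpsum
    have hVar' : ∑ i ∈ range n, ∑ j ∈ range n, pp i * pp j * (F i - F j) ^ 2
        = 2 * ∑ i, p i * f i ^ 2 := by
      rw [← bd_fin_sum2 (fun i j => p i * p j * (f i - f j) ^ 2)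
        (fun i j => pp i * pp j * (F i - F j) ^ 2)
        (fun i j => by
          show pp i.val * pp j.val * (F i.val - F j.val) ^ 2 = _
          rw [hppv i, hppv j, hFv i, hFv j])]
      exact hvar
    have hE2' : ∑ i ∈ range n, ∑ j ∈ range n, pp i * PP i j * (F i - F j) ^ 2
        = 2 * (1 - ev) * ∑ i, p i * f i ^ 2 := by
      rw [← bd_fin_sum2 (fun i j => p i * P i j * (f i - f j) ^ 2)
        (fun i j => pp i * PP i j * (F i - F j) ^ 2)
        (fun i j => by
          show pp i.val * PP i.val j.val * (F i.val - F j.val) ^ 2 = _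
          rw [hppv i, hPPv i j, hFv i, hFv j])]
      exact hE2
    -- edge weights
    set wD : ℕ → ℝ := fun l => if h : l + 1 < n then
      p ⟨l, Nat.lt_of_succ_lt h⟩ * P ⟨l, Nat.lt_of_succ_lt h⟩ ⟨l + 1, h⟩
        * (F (l + 1) - F l) ^ 2 else 0 with hwD
    have hwDnn : ∀ l, 0 ≤ wD l := by
      intro l; rw [hwD]; dsimp only; split
      · exact mul_nonneg (mul_nonneg (hp _).le (hP0 _ _)) (sq_nonneg _)
      · exact le_refl 0
    -- 2W ≤ E2'
    have hrow : ∀ i ∈ range n,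
        (if i + 1 < n then pp i * PP i (i + 1) * (F i - F (i + 1)) ^ 2 else 0)
        + (if 1 ≤ i then pp i * PP i (i - 1) * (F i - F (i - 1)) ^ 2 else 0)
        ≤ ∑ j ∈ range n, pp i * PP i j * (F i - F j) ^ 2 := by
      intro i hi
      rw [Finset.mem_range] at hi
      by_cases h1 : i + 1 < n <;> by_cases h2 : 1 ≤ i
      · rw [if_pos h1, if_pos h2]
        have hsub : ({i - 1, i + 1} : Finset ℕ) ⊆ range n := by
          intro x hx
          simp only [Finset.mem_insert, Finset.mem_singleton] at hx
          rw [Finset.mem_range]; omega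
        have hne : i - 1 ≠ i + 1 := by omega
        calc pp i * PP i (i + 1) * (F i - F (i + 1)) ^ 2
              + pp i * PP i (i - 1) * (F i - F (i - 1)) ^ 2
            = ∑ j ∈ ({i - 1, i + 1} : Finset ℕ), pp i * PP i j * (F i - F j) ^ 2 := by
              rw [Finset.sum_pair hne]; ring
          _ ≤ ∑ j ∈ range n, pp i * PP i j * (F i - F j) ^ 2 :=
              Finset.sum_le_sum_of_subset_of_nonneg hsub fun j _ _ => hTnn i j
      · rw [if_pos h1, if_neg h2, add_zero]
        exact Finset.single_le_sum (fun j _ => hTnn i j) (Finset.mem_range.mpr h1)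
      · rw [if_neg h1, if_pos h2, zero_add]
        exact Finset.single_le_sum (fun j _ => hTnn i j) (Finset.mem_range.mpr (by omega))
      · rw [if_neg h1, if_neg h2, add_zero]
        exact Finset.sum_nonneg fun j _ => hTnn i j
    have hb1 : ∑ i ∈ range n,
        (if i + 1 < n then pp i * PP i (i + 1) * (F i - F (i + 1)) ^ 2 else 0)
        = ∑ l ∈ range n, wD l := by
      refine Finset.sum_congr rfl fun i hi => ?_
      rw [Finset.mem_range] at hi
      by_cases h1 : i + 1 < n
      · rw [if_pos h1, hwD]
        dsimp only
        rw [dif_pos h1, hpp, hPP]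
        dsimp only
        rw [dif_pos hi, dif_pos hi, dif_pos h1, sqswap]
      · rw [if_neg h1, hwD]
        dsimp only
        rw [dif_neg h1]
    have hb2 : ∑ i ∈ range n,
        (if 1 ≤ i then pp i * PP i (i - 1) * (F i - F (i - 1)) ^ 2 else 0)
        = ∑ l ∈ range n, wD l := by
      have s1 : ∑ i ∈ range n,
          (if 1 ≤ i then pp i * PP i (i - 1) * (F i - F (i - 1)) ^ 2 else 0)
          = ∑ i ∈ Finset.Ico 1 n,
            (if 1 ≤ i then pp i * PP i (i - 1) * (F i - F (i - 1)) ^ 2 else 0) := by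
        refine (Finset.sum_subset ?_ ?_).symm
        · intro x hx; rw [Finset.mem_Ico] at hx; rw [Finset.mem_range]; omega
        · intro x hx hnx
          rw [Finset.mem_range] at hx
          rw [Finset.mem_Ico] at hnx
          rw [if_neg (by omega)]
      rw [s1, Finset.sum_Ico_eq_sum_range]
      have s2 : ∑ l ∈ range n, wD l = ∑ l ∈ range (n - 1), wD l := by
        refine (Finset.sum_subset ?_ ?_).symm
        · intro x hx; rw [Finset.mem_range] at hx ⊢; omega
        · intro x hx hnx
          rw [Finset.mem_range] at hx hnx
          rw [hwD]; dsimp only; rw [dif_neg (by omega)]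
      rw [s2]
      refine Finset.sum_congr rfl fun i hi => ?_
      rw [Finset.mem_range] at hi
      have h1 : i + 1 < n := by omega
      have hilt : i < n := by omega
      rw [if_pos (by omega : 1 ≤ 1 + i)]
      have e3 : 1 + i - 1 = i := by omega
      have e4 : 1 + i = i + 1 := by omega
      rw [e3, e4, hwD, hpp, hPP]
      dsimp only
      simp only [dif_pos h1, dif_pos hilt]
      exact congrArg (fun x => x * (F (i + 1) - F i) ^ 2) (hrev ⟨i + 1, h1⟩ ⟨i, hilt⟩)
    have hWle : (∑ l ∈ range n, wD l) ≤ (1 - ev) * ∑ i, p i * f i ^ 2 := by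
      have h5 : 2 * (∑ l ∈ range n, wD l)
          ≤ ∑ i ∈ range n, ∑ j ∈ range n, pp i * PP i j * (F i - F j) ^ 2 := by
        calc 2 * (∑ l ∈ range n, wD l)
            = (∑ i ∈ range n,
                (if i + 1 < n then pp i * PP i (i + 1) * (F i - F (i + 1)) ^ 2 else 0))
              + (∑ i ∈ range n,
                (if 1 ≤ i then pp i * PP i (i - 1) * (F i - F (i - 1)) ^ 2 else 0)) := by
              rw [hb1, hb2]; ring
          _ = ∑ i ∈ range n,
              ((if i + 1 < n then pp i * PP i (i + 1) * (F i - F (i + 1)) ^ 2 else 0)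
                + (if 1 ≤ i then pp i * PP i (i - 1) * (F i - F (i - 1)) ^ 2 else 0)) :=
              (Finset.sum_add_distrib).symm
          _ ≤ ∑ i ∈ range n, ∑ j ∈ range n, pp i * PP i j * (F i - F j) ^ 2 :=
              Finset.sum_le_sum hrow
      rw [hE2'] at h5
      linarith
    -- path / Poincaré bound
    have main : ∀ i j : ℕ, i ≤ j → j < n → (F i - F j) ^ 2
        ≤ ∑ l ∈ range n, (if i ≤ l ∧ l < j then (1:ℝ) else 0)
          * ((n:ℝ) * (F (l + 1) - F l) ^ 2) := by
      intro i j hij hjn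
      have hfilter : (range n).filter (fun l => i ≤ l ∧ l < j) = Finset.Ico i j := by
        ext x
        simp only [Finset.mem_filter, Finset.mem_range, Finset.mem_Ico]
        omega
      have h1 : ∑ l ∈ range n, (if i ≤ l ∧ l < j then (1:ℝ) else 0)
          * ((n:ℝ) * (F (l + 1) - F l) ^ 2)
          = (n:ℝ) * ∑ l ∈ Finset.Ico i j, (F (l + 1) - F l) ^ 2 := by
        rw [Finset.sum_congr rfl (fun l (_ : l ∈ range n) =>
          show (if i ≤ l ∧ l < j then (1:ℝ) else 0) * ((n:ℝ) * (F (l + 1) - F l) ^ 2)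
            = (n:ℝ) * (if i ≤ l ∧ l < j then (F (l + 1) - F l) ^ 2 else 0) from by
              split_ifs <;> ring)]
        rw [← Finset.mul_sum, ← Finset.sum_filter, hfilter]
      rw [h1, sqswap]
      exact bd_path F n i j hij (le_of_lt hjn)
    have hpath : ∀ i < n, ∀ j < n, (F i - F j) ^ 2
        ≤ ∑ l ∈ range n, ((if i ≤ l ∧ l < j then (1:ℝ) else 0)
          + (if j ≤ l ∧ l < i then (1:ℝ) else 0)) * ((n:ℝ) * (F (l + 1) - F l) ^ 2) := by
      intro i hi j hj
      have hsplit : ∑ l ∈ range n, ((if i ≤ l ∧ l < j then (1:ℝ) else 0)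
          + (if j ≤ l ∧ l < i then (1:ℝ) else 0)) * ((n:ℝ) * (F (l + 1) - F l) ^ 2)
          = (∑ l ∈ range n, (if i ≤ l ∧ l < j then (1:ℝ) else 0)
              * ((n:ℝ) * (F (l + 1) - F l) ^ 2))
            + (∑ l ∈ range n, (if j ≤ l ∧ l < i then (1:ℝ) else 0)
              * ((n:ℝ) * (F (l + 1) - F l) ^ 2)) := by
        rw [← Finset.sum_add_distrib]
        exact Finset.sum_congr rfl fun l _ => by ring
      rw [hsplit]
      have hnn1 : ∀ (a b : ℕ), 0 ≤ ∑ l ∈ range n, (if a ≤ l ∧ l < b then (1:ℝ) else 0)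
          * ((n:ℝ) * (F (l + 1) - F l) ^ 2) := by
        intro a b
        refine Finset.sum_nonneg fun l _ => ?_
        split_ifs <;> [skip; skip] <;> positivity
      rcases le_total i j with hij | hij
      · have := main i j hij hj
        linarith [hnn1 j i]
      · have := main j i hij hi
        rw [sqswap]
        linarith [hnn1 i j]
    -- assemble Poincaré
    have hS2 : ∑ i ∈ range n, ∑ j ∈ range n, pp i * pp j * (F i - F j) ^ 2
        ≤ ∑ l ∈ range n, ((n:ℝ) * (F (l + 1) - F l) ^ 2)
          * (2 * (∑ i ∈ range n, if i ≤ l then pp i else 0)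
            * (∑ j ∈ range n, if l < j then pp j else 0)) := by
      calc ∑ i ∈ range n, ∑ j ∈ range n, pp i * pp j * (F i - F j) ^ 2
          ≤ ∑ i ∈ range n, ∑ j ∈ range n, (pp i * pp j
            * (∑ l ∈ range n, ((if i ≤ l ∧ l < j then (1:ℝ) else 0)
              + (if j ≤ l ∧ l < i then (1:ℝ) else 0))
                * ((n:ℝ) * (F (l + 1) - F l) ^ 2))) := by
            refine Finset.sum_le_sum fun i hi => Finset.sum_le_sum fun j hj => ?_
            exact mul_le_mul_of_nonneg_left
              (hpath i (Finset.mem_range.mp hi) j (Finset.mem_range.mp hj))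
              (mul_nonneg (hppnn i) (hppnn j))
        _ = ∑ l ∈ range n, ((n:ℝ) * (F (l + 1) - F l) ^ 2)
            * (2 * (∑ i ∈ range n, if i ≤ l then pp i else 0)
              * (∑ j ∈ range n, if l < j then pp j else 0)) :=
            bd_swap n pp (fun l => (n:ℝ) * (F (l + 1) - F l) ^ 2)
    -- edge bound
    have hedge : ∀ l ∈ range n, ((n:ℝ) * (F (l + 1) - F l) ^ 2)
        * (2 * (∑ i ∈ range n, if i ≤ l then pp i else 0)
          * (∑ j ∈ range n, if l < j then pp j else 0))
        ≤ (n:ℝ) * (2 * ((n:ℝ) * B / (A * c)) * wD l) := by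
      intro l hl
      rw [Finset.mem_range] at hl
      have hLnn : 0 ≤ ∑ i ∈ range n, (if i ≤ l then pp i else 0) :=
        Finset.sum_nonneg fun i _ => by split_ifs; exacts [hppnn i, le_refl 0]
      have hUnn : 0 ≤ ∑ j ∈ range n, (if l < j then pp j else 0) :=
        Finset.sum_nonneg fun j _ => by split_ifs; exacts [hppnn j, le_refl 0]
      by_cases hl1 : l + 1 < n
      · set li : Fin n := ⟨l, Nat.lt_of_succ_lt hl1⟩ with hli
        set ls : Fin n := ⟨l + 1, hl1⟩ with hls
        have hww : wD l = p li * P li ls * (F (l + 1) - F l) ^ 2 := by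
          rw [hwD]; dsimp only; rw [dif_pos hl1]
        have hUle1 : (∑ j ∈ range n, if l < j then pp j else 0) ≤ 1 := by
          calc (∑ j ∈ range n, if l < j then pp j else 0) ≤ ∑ j ∈ range n, pp j :=
              Finset.sum_le_sum fun j _ => by
                split_ifs
                · exact le_refl _
                · exact hppnn j
            _ = 1 := hsum1
        have hLle1 : (∑ i ∈ range n, if i ≤ l then pp i else 0) ≤ 1 := by
          calc (∑ i ∈ range n, if i ≤ l then pp i else 0) ≤ ∑ i ∈ range n, pp i :=
              Finset.sum_le_sum fun i _ => by
                split_ifs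
                · exact le_refl _
                · exact hppnn i
            _ = 1 := hsum1
        have hLU : (∑ i ∈ range n, if i ≤ l then pp i else 0)
            * (∑ j ∈ range n, if l < j then pp j else 0)
            ≤ ((n:ℝ) * B / (A * c)) * (p li * P li ls) := by
          rcases le_or_gt (l + 1) k.val with hk | hk
          · -- left of the mode
            have hLle : (∑ i ∈ range n, if i ≤ l then pp i else 0) ≤ (n:ℝ) * (B * p ls) := by
              calc (∑ i ∈ range n, if i ≤ l then pp i else 0)
                  ≤ ∑ _i ∈ range n, B * p ls := by
                    refine Finset.sum_le_sum fun i hi => ?_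
                    rw [Finset.mem_range] at hi
                    split_ifs with h
                    · have : pp i = p ⟨i, hi⟩ := by rw [hpp]; dsimp only; rw [dif_pos hi]
                      rw [this]
                      refine hmode1 ⟨i, hi⟩ ls ?_ ?_
                      · rw [Fin.le_def]
                        show i ≤ l + 1
                        omega
                      · rw [Fin.le_def]
                        show l + 1 ≤ k.val
                        exact hk
                    · exact mul_nonneg hB.le (hp ls).le
                _ = (n:ℝ) * (B * p ls) := by
                    rw [Finset.sum_const, Finset.card_range, nsmul_eq_mul]
            have hPb : A * c ≤ P ls li := (hnb li ls rfl).2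
            have hplsp : p ls * (A * c) ≤ p li * P li ls := by
              rw [hrev li ls]
              exact mul_le_mul_of_nonneg_left hPb (hp ls).le
            calc (∑ i ∈ range n, if i ≤ l then pp i else 0)
                * (∑ j ∈ range n, if l < j then pp j else 0)
                ≤ ((n:ℝ) * (B * p ls)) * 1 :=
                  mul_le_mul hLle hUle1 hUnn
                    (mul_nonneg npos.le (mul_nonneg hB.le (hp ls).le))
              _ = (n:ℝ) * B * p ls := by ring
              _ ≤ (n:ℝ) * B / (A * c) * (p li * P li ls) := by
                  rw [div_mul_eq_mul_div, le_div_iff₀ hAc]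
                  calc (n:ℝ) * B * p ls * (A * c) = (n:ℝ) * B * (p ls * (A * c)) := by ring
                    _ ≤ (n:ℝ) * B * (p li * P li ls) :=
                      mul_le_mul_of_nonneg_left hplsp (mul_nonneg npos.le hB.le)
          · -- right of the mode
            have hUle : (∑ j ∈ range n, if l < j then pp j else 0) ≤ (n:ℝ) * (B * p li) := by
              calc (∑ j ∈ range n, if l < j then pp j else 0)
                  ≤ ∑ _j ∈ range n, B * p li := by
                    refine Finset.sum_le_sum fun j hj => ?_
                    rw [Finset.mem_range] at hj
                    split_ifs with h
                    · have : pp j = p ⟨j, hj⟩ := by rw [hpp]; dsimp only; rw [dif_pos hj]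
                      rw [this]
                      refine hmode2 li ⟨j, hj⟩ ?_ ?_
                      · rw [Fin.le_def]
                        show k.val ≤ l
                        omega
                      · rw [Fin.le_def]
                        show l ≤ j
                        omega
                    · exact mul_nonneg hB.le (hp li).le
                _ = (n:ℝ) * (B * p li) := by
                    rw [Finset.sum_const, Finset.card_range, nsmul_eq_mul]
            have hPb : A * c ≤ P li ls := (hnb li ls rfl).1
            have hplsp : p li * (A * c) ≤ p li * P li ls :=
              mul_le_mul_of_nonneg_left hPb (hp li).le
            calc (∑ i ∈ range n, if i ≤ l then pp i else 0)
                * (∑ j ∈ range n, if l < j then pp j else 0)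
                ≤ 1 * ((n:ℝ) * (B * p li)) :=
                  mul_le_mul hLle1 hUle hUnn (by norm_num)
              _ = (n:ℝ) * B * p li := by ring
              _ ≤ (n:ℝ) * B / (A * c) * (p li * P li ls) := by
                  rw [div_mul_eq_mul_div, le_div_iff₀ hAc]
                  calc (n:ℝ) * B * p li * (A * c) = (n:ℝ) * B * (p li * (A * c)) := by ring
                    _ ≤ (n:ℝ) * B * (p li * P li ls) :=
                      mul_le_mul_of_nonneg_left hplsp (mul_nonneg npos.le hB.le)
        rw [hww]
        calc ((n:ℝ) * (F (l + 1) - F l) ^ 2)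
            * (2 * (∑ i ∈ range n, if i ≤ l then pp i else 0)
              * (∑ j ∈ range n, if l < j then pp j else 0))
            = ((n:ℝ) * (F (l + 1) - F l) ^ 2)
              * (2 * ((∑ i ∈ range n, if i ≤ l then pp i else 0)
                * (∑ j ∈ range n, if l < j then pp j else 0))) := by ring
          _ ≤ ((n:ℝ) * (F (l + 1) - F l) ^ 2)
              * (2 * (((n:ℝ) * B / (A * c)) * (p li * P li ls))) := by
              refine mul_le_mul_of_nonneg_left ?_ (by positivity)
              linarith
          _ = (n:ℝ) * (2 * ((n:ℝ) * B / (A * c))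
              * (p li * P li ls * (F (l + 1) - F l) ^ 2)) := by ring
      · -- l + 1 ≥ n : both sides vanish
        have hU : (∑ j ∈ range n, if l < j then pp j else 0) = 0 :=
          Finset.sum_eq_zero fun j hj => by
            rw [Finset.mem_range] at hj
            rw [if_neg (by omega)]
        have hw0 : wD l = 0 := by rw [hwD]; dsimp only; rw [dif_neg hl1]
        rw [hU, hw0]
        simp
    -- combine everything
    have chain : 2 * (∑ i, p i * f i ^ 2)
        ≤ 2 * ((n:ℝ) * (n:ℝ) * B / (A * c)) * ∑ l ∈ range n, wD l := by
      calc 2 * (∑ i, p i * f i ^ 2)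
          = ∑ i ∈ range n, ∑ j ∈ range n, pp i * pp j * (F i - F j) ^ 2 := hVar'.symm
        _ ≤ ∑ l ∈ range n, ((n:ℝ) * (F (l + 1) - F l) ^ 2)
            * (2 * (∑ i ∈ range n, if i ≤ l then pp i else 0)
              * (∑ j ∈ range n, if l < j then pp j else 0)) := hS2
        _ ≤ ∑ l ∈ range n, (n:ℝ) * (2 * ((n:ℝ) * B / (A * c)) * wD l) :=
            Finset.sum_le_sum hedge
        _ = ∑ l ∈ range n, (2 * ((n:ℝ) * (n:ℝ) * B / (A * c))) * wD l :=
            Finset.sum_congr rfl fun l _ => by ring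
        _ = 2 * ((n:ℝ) * (n:ℝ) * B / (A * c)) * ∑ l ∈ range n, wD l :=
            (Finset.mul_sum _ _ _).symm
    have step2 : 2 * (∑ i, p i * f i ^ 2)
        ≤ 2 * ((n:ℝ) * (n:ℝ) * B / (A * c)) * ((1 - ev) * ∑ i, p i * f i ^ 2) :=
      le_trans chain (mul_le_mul_of_nonneg_left hWle (by positivity))
    have h9 : (1:ℝ) ≤ ((n:ℝ) * (n:ℝ) * B / (A * c)) * (1 - ev) := by
      have h10 : (∑ i, p i * f i ^ 2) * 1
          ≤ (∑ i, p i * f i ^ 2) * (((n:ℝ) * (n:ℝ) * B / (A * c)) * (1 - ev)) := by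
        nlinarith [step2]
      exact (mul_le_mul_iff_right₀ hN2pos).mp h10
    have h11 : A * c ≤ ((n:ℝ) * (n:ℝ) * B) * (1 - ev) := by
      rw [div_mul_eq_mul_div, le_div_iff₀ hAc, one_mul] at h9
      exact h9
    have h2' : (n:ℝ) ^ ((2:ℕ):ℝ) = (n:ℝ) * (n:ℝ) := by
      rw [Real.rpow_natCast]; ring
    have hrpow : (n:ℝ) ^ (-(q + 2)) = c / ((n:ℝ) * (n:ℝ)) := by
      rw [show -(q + 2) = -q + -((2:ℕ):ℝ) by push_cast; ring, Real.rpow_add npos,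
        Real.rpow_neg npos.le ((2:ℕ):ℝ), h2', ← hc]
      ring
    have hfin : (A / B) * (n:ℝ) ^ (-(q + 2)) ≤ 1 - ev := by
      rw [hrpow, div_mul_div_comm, div_le_iff₀ (by positivity)]
      calc A * c ≤ ((n:ℝ) * (n:ℝ) * B) * (1 - ev) := h11
        _ = (1 - ev) * (B * ((n:ℝ) * (n:ℝ))) := by ring
    linarith [hfin]
end

section
/- Fix 0 < β < 1 and let q_N(i) = C(N,(N−i)/2) exp(β i²/(2N)) for even i in {0,...,N}. Then there exists N₀ such that for all even N ≥ N₀, q_N is non-increasing: q_N(i) ≤ q_N(j) whenever j ≤ i (both even in {0,...,N}). -/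
open Finset

/-- `q_N(i) = C(N,(N-i)/2) exp(β i²/(2N))`. -/
noncomputable def qIsing (β : ℝ) (N i : ℕ) : ℝ :=
  (N.choose ((N - i) / 2) : ℝ) * Real.exp (β * (i : ℝ) ^ 2 / (2 * N))

/-- Padé-type bound: `exp(2x)(1-x) ≤ 1+x` for `x ≥ 0`. -/
lemma qIsing_key (x : ℝ) (hx : 0 ≤ x) : Real.exp (2 * x) * (1 - x) ≤ 1 + x := by
  have hmono : Monotone (fun x : ℝ => 1 + x - Real.exp (2 * x) * (1 - x)) := by
    apply monotone_of_hasDerivAt_nonneg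
      (f' := fun x => 1 - Real.exp (2 * x) * (1 - 2 * x))
    · intro x
      have h1 : HasDerivAt (fun x : ℝ => Real.exp (2 * x)) (Real.exp (2 * x) * 2) x :=
        (Real.hasDerivAt_exp (2 * x)).comp x (by simpa using (hasDerivAt_id x).const_mul (2:ℝ))
      have h2 : HasDerivAt (fun x : ℝ => (1:ℝ) - x) (-1) x := by
        simpa using (hasDerivAt_id x).const_sub (1:ℝ)
      have h3 := h1.mul h2
      have h4 : HasDerivAt (fun x : ℝ => 1 + x) 1 x := by
        simpa using (hasDerivAt_id x).const_add (1:ℝ)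
      have h5 := h4.sub h3
      refine h5.congr_deriv ?_
      ring
    · intro x
      have h5 : 1 - 2 * x ≤ Real.exp (-(2 * x)) := by
        have := Real.add_one_le_exp (-(2 * x))
        linarith
      have h6 : Real.exp (2 * x) * (1 - 2 * x) ≤ Real.exp (2 * x) * Real.exp (-(2 * x)) :=
        mul_le_mul_of_nonneg_left h5 (Real.exp_pos _).le
      rw [← Real.exp_add] at h6
      simp only [add_neg_cancel, Real.exp_zero] at h6
      simp only [Pi.zero_apply]
      linarith
  have h := hmono hx
  simp only [mul_zero, Real.exp_zero, sub_zero, add_zero, one_mul] at h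
  linarith

/-- One step of the monotonicity: `q_N(i+2) ≤ q_N(i)`. -/
lemma qIsing_step (β : ℝ) (hβ0 : 0 < β) (N : ℕ) (hN : β * (N + 1) ≤ N)
    (hNe : Even N) (i : ℕ) (hi : Even i) (h2 : i + 2 ≤ N) :
    qIsing β N (i + 2) ≤ qIsing β N i := by
  have hNpos : 0 < N := lt_of_lt_of_le (by norm_num) h2
  obtain ⟨a, ha⟩ := hNe
  obtain ⟨b, hb⟩ := hi
  set k : ℕ := (N - i) / 2 with hk
  have hNi : N - i = 2 * k := by omega
  have hk1 : 1 ≤ k := by omega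
  have hkN : 2 * k ≤ N := by omega
  have hk2 : (N - (i + 2)) / 2 = k - 1 := by omega
  -- real facts
  have hNr : (0:ℝ) < N := by exact_mod_cast hNpos
  have hkr : (0:ℝ) < k := by exact_mod_cast hk1
  have hir : (i:ℝ) = (N:ℝ) - 2 * k := by
    have : (N:ℝ) - (i:ℝ) = 2 * k := by
      rw [← Nat.cast_sub (by omega), hNi]; push_cast; ring
    linarith
  -- the choose identity
  have hch : (N.choose k : ℝ) * k = (N.choose (k - 1) : ℝ) * ((N:ℝ) - k + 1) := by
    have h := Nat.choose_succ_right_eq N (k - 1)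
    have hk' : k - 1 + 1 = k := by omega
    rw [hk'] at h
    have : ((N.choose k * k : ℕ) : ℝ) = ((N.choose (k-1) * (N - (k-1)) : ℕ) : ℝ) := by
      exact_mod_cast congrArg (Nat.cast (R := ℝ)) h
    rw [Nat.cast_mul, Nat.cast_mul, Nat.cast_sub (by omega)] at this
    rw [this, Nat.cast_sub (by omega)]
    push_cast
    ring
  -- key inequality: exp(2(i+1)/(N+1)) * k ≤ N - k + 1
  have hx0 : (0:ℝ) ≤ ((i:ℝ) + 1) / ((N:ℝ) + 1) := by positivity
  have hkey := qIsing_key (((i:ℝ) + 1) / ((N:ℝ) + 1)) hx0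
  have hN1 : (0:ℝ) < (N:ℝ) + 1 := by linarith
  have hkey2 : Real.exp (2 * (((i:ℝ) + 1) / ((N:ℝ) + 1))) * (k : ℝ) ≤ (N:ℝ) - k + 1 := by
    have e1 : 1 - ((i:ℝ) + 1) / ((N:ℝ) + 1) = 2 * k / ((N:ℝ) + 1) := by
      first
      | (rw [hir]; field_simp; ring)
      | (rw [hir]; field_simp)
    have e2 : 1 + ((i:ℝ) + 1) / ((N:ℝ) + 1) = 2 * ((N:ℝ) - k + 1) / ((N:ℝ) + 1) := by
      first
      | (rw [hir]; field_simp; ring)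
      | (rw [hir]; field_simp)
    rw [e1, e2] at hkey
    have hmul := mul_le_mul_of_nonneg_right hkey (le_of_lt hN1)
    rw [mul_assoc, div_mul_cancel₀ _ (ne_of_gt hN1), div_mul_cancel₀ _ (ne_of_gt hN1)] at hmul
    have hrw : Real.exp (2 * (((i:ℝ) + 1) / ((N:ℝ) + 1))) * (2 * (k:ℝ)) =
        2 * (Real.exp (2 * (((i:ℝ) + 1) / ((N:ℝ) + 1))) * (k:ℝ)) := by ring
    rw [hrw] at hmul
    linarith
  -- compare exponents
  have hexp : Real.exp (2 * β * ((i:ℝ) + 1) / N) ≤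
      Real.exp (2 * (((i:ℝ) + 1) / ((N:ℝ) + 1))) := by
    apply Real.exp_le_exp.mpr
    have hrw2 : 2 * (((i:ℝ) + 1) / ((N:ℝ) + 1)) = 2 * ((i:ℝ) + 1) / ((N:ℝ) + 1) := by ring
    rw [hrw2, div_le_div_iff₀ hNr hN1]
    nlinarith [mul_le_mul_of_nonneg_left hN (show (0:ℝ) ≤ 2 * ((i:ℝ) + 1) by positivity)]
  have hmain : Real.exp (2 * β * ((i:ℝ) + 1) / N) * (k : ℝ) ≤ (N:ℝ) - k + 1 :=
    le_trans (mul_le_mul_of_nonneg_right hexp hkr.le) hkey2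
  -- put it together
  have hsuff : (N.choose (k - 1) : ℝ) * Real.exp (2 * β * ((i:ℝ) + 1) / N) ≤ (N.choose k : ℝ) := by
    rw [← mul_le_mul_iff_left₀ hkr]
    calc (N.choose (k - 1) : ℝ) * Real.exp (2 * β * ((i:ℝ) + 1) / N) * k
        = (N.choose (k - 1) : ℝ) * (Real.exp (2 * β * ((i:ℝ) + 1) / N) * k) := by ring
      _ ≤ (N.choose (k - 1) : ℝ) * ((N:ℝ) - k + 1) :=
          mul_le_mul_of_nonneg_left hmain (Nat.cast_nonneg _)
      _ = (N.choose k : ℝ) * k := hch.symm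
  -- expand qIsing
  unfold qIsing
  rw [hk2, ← hk]
  have hsplit : Real.exp (β * ((i + 2 : ℕ) : ℝ) ^ 2 / (2 * N)) =
      Real.exp (2 * β * ((i:ℝ) + 1) / N) * Real.exp (β * (i:ℝ) ^ 2 / (2 * N)) := by
    rw [← Real.exp_add]
    congr 1
    push_cast
    field_simp
    ring
  rw [hsplit]
  calc (N.choose (k - 1) : ℝ) * (Real.exp (2 * β * ((i:ℝ) + 1) / N) *
        Real.exp (β * (i:ℝ) ^ 2 / (2 * N)))
      = (N.choose (k - 1) : ℝ) * Real.exp (2 * β * ((i:ℝ) + 1) / N) *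
        Real.exp (β * (i:ℝ) ^ 2 / (2 * N)) := by ring
    _ ≤ (N.choose k : ℝ) * Real.exp (β * (i:ℝ) ^ 2 / (2 * N)) :=
        mul_le_mul_of_nonneg_right hsuff (Real.exp_pos _).le

lemma qIsing_steps (β : ℝ) (hβ0 : 0 < β) (N : ℕ) (hN : β * (N + 1) ≤ N)
    (hNe : Even N) : ∀ m j : ℕ, Even j → j + 2 * m ≤ N →
    qIsing β N (j + 2 * m) ≤ qIsing β N j := by
  intro m
  induction m with
  | zero => intro j _ _; simp
  | succ m ih =>
    intro j hj hle
    have h1 : j + 2 * m + 2 ≤ N := by omega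
    have heq : j + 2 * (m + 1) = (j + 2 * m) + 2 := by ring
    rw [heq]
    calc qIsing β N ((j + 2 * m) + 2) ≤ qIsing β N (j + 2 * m) :=
          qIsing_step β hβ0 N hN hNe (j + 2 * m) (hj.add (even_two_mul m)) h1
      _ ≤ qIsing β N j := ih j hj (by omega)

/-- for `0 < β < 1` there is `N₀` such that for all even `N ≥ N₀` the
function `q_N` is non-increasing on even indices of `{0,…,N}`. -/
theorem qIsing_decreasing (β : ℝ) (hβ0 : 0 < β) (hβ1 : β < 1) :
    ∃ N₀ : ℕ, ∀ N : ℕ, N₀ ≤ N → Even N →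
      ∀ i j : ℕ, Even i → Even j → i ≤ N → j ≤ N → j ≤ i →
        qIsing β N i ≤ qIsing β N j := by
  refine ⟨⌈β / (1 - β)⌉₊ + 1, fun N hN hNe i j hi hj hiN hjN hji => ?_⟩
  have hβN : β * (N + 1) ≤ N := by
    have h1 : β / (1 - β) ≤ (⌈β / (1 - β)⌉₊ : ℝ) := Nat.le_ceil _
    have h2 : (⌈β / (1 - β)⌉₊ : ℝ) ≤ (N : ℝ) := by exact_mod_cast Nat.le_of_succ_le hN
    have h3 : β / (1 - β) ≤ (N : ℝ) := le_trans h1 h2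
    rw [div_le_iff₀ (by linarith)] at h3
    nlinarith
  obtain ⟨a, ha⟩ := hi
  obtain ⟨b, hb⟩ := hj
  have hm : i = j + 2 * (a - b) := by omega
  rw [hm]
  exact qIsing_steps β hβ0 N hβN hNe (a - b) j ⟨b, hb⟩ (by omega)
end

section
/- Fix β ≥ 1 and let q_N(i) = C(N,(N−i)/2) exp(β i²/(2N)) for even i in {0,...,N}. Then there exists N₀ such that for every even N ≥ N₀ there is an even integer k_N with: q_N(i) ≤ q_N(j) whenever i ≤ j ≤ k_N, and q_N(i) ≥ q_N(j) whenever k_N ≤ i ≤ j (all indices even). That is, q_N is unimodal with mode k_N. -/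
open Finset

lemma qIsing_pos (β : ℝ) (N i : ℕ) : 0 < qIsing β N i := by
  refine mul_pos ?_ (Real.exp_pos _)
  have h : (N - i) / 2 ≤ N := le_trans (Nat.div_le_self _ _) (Nat.sub_le _ _)
  exact_mod_cast Nat.choose_pos h

lemma qIsing_step_s9 (β : ℝ) (M t : ℕ) (ht : t < M) :
    qIsing β (2*M) (2*t+2) = qIsing β (2*M) (2*t) *
      (((M:ℝ) - t) / ((M:ℝ) + t + 1) * Real.exp (β * (8*t+4) / (4*M))) := by
  have h1 : (2*M - (2*t+2)) / 2 = M - t - 1 := by omega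
  have h2 : (2*M - 2*t) / 2 = M - t := by omega
  have hc : (2*M).choose (M - t) * (M - t) = (2*M).choose (M - t - 1) * (M + t + 1) := by
    have h := Nat.choose_succ_right_eq (2*M) (M - t - 1)
    have e1 : M - t - 1 + 1 = M - t := by omega
    have e2 : 2*M - (M - t - 1) = M + t + 1 := by omega
    rw [e1, e2] at h
    exact h
  have hc' := congrArg (Nat.cast : ℕ → ℝ) hc
  push_cast [Nat.cast_sub ht.le] at hc'
  have hd : ((M:ℝ) + t + 1) ≠ 0 := by positivity
  have hcc : ((2*M).choose (M - t - 1) : ℝ) =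
      ((2*M).choose (M - t) : ℝ) * ((M:ℝ) - t) / ((M:ℝ) + t + 1) := by
    rw [eq_div_iff hd]
    linarith [hc']
  have he : Real.exp (β * ((2*t+2:ℕ) : ℝ) ^ 2 / (2 * ((2*M:ℕ):ℝ))) =
      Real.exp (β * ((2*t:ℕ) : ℝ) ^ 2 / (2 * ((2*M:ℕ):ℝ))) * Real.exp (β * (8*t+4) / (4*M)) := by
    rw [← Real.exp_add]
    congr 1
    push_cast
    ring
  unfold qIsing
  rw [h1, h2, hcc]
  push_cast
  push_cast at he
  rw [he]
  ring

/-- for `β ≥ 1` there is `N₀` such that for every even `N ≥ N₀` the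
function `q_N` on even indices of `{0,…,N}` is unimodal: non-decreasing up to some
(even) mode `k_N` and non-increasing afterwards. -/
theorem qIsing_unimodal (β : ℝ) (hβ : 1 ≤ β) :
    ∃ N₀ : ℕ, ∀ N : ℕ, N₀ ≤ N → Even N →
      ∃ k : ℕ, Even k ∧ k ≤ N ∧
        (∀ i j : ℕ, Even i → Even j → i ≤ j → j ≤ k → qIsing β N i ≤ qIsing β N j) ∧
        (∀ i j : ℕ, Even i → Even j → k ≤ i → i ≤ j → j ≤ N →
          qIsing β N j ≤ qIsing β N i) := by
  classical
  refine ⟨1, fun N hN hNe => ?_⟩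
  obtain ⟨M, rfl⟩ : ∃ M, N = 2*M := by
    obtain ⟨m, hm⟩ := hNe; exact ⟨m, by omega⟩
  have hM : 1 ≤ M := by omega
  have hM0 : (0:ℝ) < M := by exact_mod_cast hM
  set Q : ℕ → ℝ := fun i => qIsing β (2*M) i with hQ
  set ρ : ℕ → ℝ := fun t => ((M:ℝ) - t) / ((M:ℝ) + t + 1) * Real.exp (β * (8*t+4) / (4*M))
    with hρ
  have hstep : ∀ t, t < M → Q (2*t+2) = Q (2*t) * ρ t := fun t ht => qIsing_step_s9 β M t ht
  have hQpos : ∀ i, 0 < Q i := fun i => qIsing_pos β (2*M) i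
  have hρpos : ∀ t, t < M → 0 < ρ t := by
    intro t ht
    have : (t:ℝ) < M := by exact_mod_cast ht
    exact mul_pos (div_pos (by linarith) (by positivity)) (Real.exp_pos _)
  have hρ0 : 1 ≤ ρ 0 := by
    simp only [hρ]
    push_cast
    have h1 : β / M + 1 ≤ Real.exp (β / M) := Real.add_one_le_exp _
    have harg : β * (8*0+4) / (4*M) = β / M := by
      field_simp
      ring
    rw [harg]
    rw [div_mul_eq_mul_div, le_div_iff₀ (by positivity)]
    have h2 : (M:ℝ) * (β / M + 1) ≤ (M:ℝ) * Real.exp (β / M) :=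
      mul_le_mul_of_nonneg_left h1 hM0.le
    have h3 : (M:ℝ) * (β / M + 1) = β + M := by field_simp
    nlinarith
  -- log-concavity of ρ
  have hconc : ∀ t, t + 2 < M → ρ (t+2) * ρ t ≤ ρ (t+1) ^ 2 := by
    intro t ht
    have ht' : (t:ℝ) + 2 < M := by exact_mod_cast ht
    have hF : ((M:ℝ) - (t+2)) / ((M:ℝ) + (t+2) + 1) * (((M:ℝ) - t) / ((M:ℝ) + t + 1)) ≤
        (((M:ℝ) - (t+1)) / ((M:ℝ) + (t+1) + 1)) ^ 2 := by
      rw [div_mul_div_comm, div_pow, div_le_div_iff₀ (by positivity) (by positivity)]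
      nlinarith [sq_nonneg ((M:ℝ) - t - 1), sq_nonneg ((M:ℝ) + t + 2)]
    have hE : Real.exp (β * (8*((t:ℝ)+2)+4) / (4*M)) * Real.exp (β * (8*(t:ℝ)+4) / (4*M)) =
        Real.exp (β * (8*((t:ℝ)+1)+4) / (4*M)) ^ 2 := by
      rw [← Real.exp_add, sq, ← Real.exp_add]
      congr 1
      ring
    simp only [hρ]
    push_cast
    calc ((M:ℝ) - (t+2)) / ((M:ℝ) + (t+2) + 1) * Real.exp (β * (8*((t:ℝ)+2)+4) / (4*M)) *
          (((M:ℝ) - t) / ((M:ℝ) + t + 1) * Real.exp (β * (8*(t:ℝ)+4) / (4*M)))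
        = (((M:ℝ) - (t+2)) / ((M:ℝ) + (t+2) + 1) * (((M:ℝ) - t) / ((M:ℝ) + t + 1))) *
          (Real.exp (β * (8*((t:ℝ)+2)+4) / (4*M)) * Real.exp (β * (8*(t:ℝ)+4) / (4*M))) := by ring
      _ ≤ (((M:ℝ) - (t+1)) / ((M:ℝ) + (t+1) + 1)) ^ 2 *
          (Real.exp (β * (8*((t:ℝ)+2)+4) / (4*M)) * Real.exp (β * (8*(t:ℝ)+4) / (4*M))) := by
          exact mul_le_mul_of_nonneg_right hF (by positivity)
      _ = (((M:ℝ) - (t+1)) / ((M:ℝ) + (t+1) + 1) * Real.exp (β * (8*((t:ℝ)+1)+4) / (4*M))) ^ 2 := by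
          rw [hE]; ring
  by_cases hex : ∃ t, t < M ∧ ρ t < 1
  · set T := Nat.find hex with hT
    obtain ⟨hTM, hρT⟩ : T < M ∧ ρ T < 1 := Nat.find_spec hex
    have hmin : ∀ s, s < T → s < M → 1 ≤ ρ s := by
      intro s hs hsM
      have := Nat.find_min hex hs
      push_neg at this
      exact this hsM
    have hT1 : 1 ≤ T := by
      by_contra h
      have : T = 0 := by omega
      rw [this] at hρT
      linarith
    -- ρ is ≤ ρ T from T on
    have hmono : ∀ s, T + s + 1 < M → ρ (T + s + 1) ≤ ρ (T + s) := by
      intro s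
      induction s with
      | zero =>
        intro h
        show ρ (T + 1) ≤ ρ T
        have e : T - 1 + 2 = T + 1 := by omega
        have e2 : T - 1 + 1 = T := by omega
        have hc := hconc (T - 1) (by omega)
        rw [e, e2] at hc
        have hle : ρ T ≤ ρ (T - 1) := le_trans hρT.le (hmin (T-1) (by omega) (by omega))
        have p0 : 0 < ρ (T - 1) := hρpos _ (by omega)
        have p1 : 0 < ρ T := hρpos _ hTM
        nlinarith
      | succ s ih =>
        intro h
        show ρ (T + s + 2) ≤ ρ (T + s + 1)
        have hc := hconc (T + s) (by omega)
        have ihs := ih (by omega)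
        have p0 : 0 < ρ (T + s) := hρpos _ (by omega)
        have p1 : 0 < ρ (T + s + 1) := hρpos _ (by omega)
        nlinarith
    have hall : ∀ s, T + s < M → ρ (T + s) ≤ ρ T := by
      intro s
      induction s with
      | zero => intro _; exact le_refl _
      | succ s ih =>
        intro h
        have h1 := hmono s (by omega)
        have h2 := ih (by omega)
        calc ρ (T + (s+1)) = ρ (T + s + 1) := by ring_nf
          _ ≤ ρ (T + s) := h1
          _ ≤ ρ T := h2
    have hρlt : ∀ t, T ≤ t → t < M → ρ t < 1 := by
      intro t h1 h2
      have e : t = T + (t - T) := by omega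
      rw [e]
      exact lt_of_le_of_lt (hall (t - T) (by omega)) hρT
    have hup : ∀ t, t < T → Q (2*t) ≤ Q (2*t+2) := by
      intro t ht
      rw [hstep t (by omega)]
      nlinarith [hQpos (2*t), hmin t ht (by omega)]
    have hdn : ∀ t, T ≤ t → t < M → Q (2*t+2) ≤ Q (2*t) := by
      intro t h1 h2
      rw [hstep t h2]
      nlinarith [hQpos (2*t), hρlt t h1 h2, hρpos t h2]
    have upchain : ∀ d a, a + d ≤ T → Q (2*a) ≤ Q (2*(a+d)) := by
      intro d
      induction d with
      | zero => intro a _; simp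
      | succ d ih =>
        intro a h
        have h1 := ih a (by omega)
        have h2 := hup (a+d) (by omega)
        have e : 2*(a+d)+2 = 2*(a+(d+1)) := by omega
        rw [e] at h2
        linarith
    have dnchain : ∀ d a, T ≤ a → a + d ≤ M → Q (2*(a+d)) ≤ Q (2*a) := by
      intro d
      induction d with
      | zero => intro a _ _; simp
      | succ d ih =>
        intro a hTa h
        have h1 := ih a hTa (by omega)
        have h2 := hdn (a+d) (by omega) (by omega)
        have e : 2*(a+d)+2 = 2*(a+(d+1)) := by omega
        rw [e] at h2
        linarith
    refine ⟨2*T, ⟨T, by omega⟩, by omega, ?_, ?_⟩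
    · intro i j hi hj hij hjk
      obtain ⟨a, rfl⟩ : ∃ a, i = 2*a := by obtain ⟨a, ha⟩ := hi; exact ⟨a, by omega⟩
      obtain ⟨b, rfl⟩ : ∃ b, j = 2*b := by obtain ⟨b, hb⟩ := hj; exact ⟨b, by omega⟩
      have hab : a ≤ b := by omega
      have h := upchain (b - a) a (by omega)
      rwa [show a + (b - a) = b from by omega] at h
    · intro i j hi hj hki hij hjN
      obtain ⟨a, rfl⟩ : ∃ a, i = 2*a := by obtain ⟨a, ha⟩ := hi; exact ⟨a, by omega⟩
      obtain ⟨b, rfl⟩ : ∃ b, j = 2*b := by obtain ⟨b, hb⟩ := hj; exact ⟨b, by omega⟩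
      have h := dnchain (b - a) a (by omega) (by omega)
      rwa [show a + (b - a) = b from by omega] at h
  · push_neg at hex
    have hup : ∀ t, t < M → Q (2*t) ≤ Q (2*t+2) := by
      intro t ht
      rw [hstep t ht]
      nlinarith [hQpos (2*t), hex t ht]
    have upchain : ∀ d a, a + d ≤ M → Q (2*a) ≤ Q (2*(a+d)) := by
      intro d
      induction d with
      | zero => intro a _; simp
      | succ d ih =>
        intro a h
        have h1 := ih a (by omega)
        have h2 := hup (a+d) (by omega)
        have e : 2*(a+d)+2 = 2*(a+(d+1)) := by omega
        rw [e] at h2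
        linarith
    refine ⟨2*M, ⟨M, by omega⟩, le_refl _, ?_, ?_⟩
    · intro i j hi hj hij hjk
      obtain ⟨a, rfl⟩ : ∃ a, i = 2*a := by obtain ⟨a, ha⟩ := hi; exact ⟨a, by omega⟩
      obtain ⟨b, rfl⟩ : ∃ b, j = 2*b := by obtain ⟨b, hb⟩ := hj; exact ⟨b, by omega⟩
      have h := upchain (b - a) a (by omega)
      rwa [show a + (b - a) = b from by omega] at h
    · intro i j hi hj hki hij hjN
      have : i = j := by omega
      rw [this]
end
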